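/- With Q_t and P_t as defined via Q_t(u₁,...,u_t) = b‖u₁‖² + c·Σ_{s<t}‖u_{s+1}−u_s‖² + Σ_{s≤t}(y_s − u_sᵀx_s)², the function P_t has the closed form P_t(u) = uᵀD_t u − 2uᵀe_t + f_t, where D₁ = bI + x₁x₁ᵀ, D_t = (D_{t-1}⁻¹ + c⁻¹I)⁻¹ + x_t x_tᵀ, e₁ = y₁x₁, e_t = (I + c⁻¹D_{t-1})⁻¹e_{t-1} + y_t x_t, f₁ = y₁², and f_t = f_{t-1} − e_{t-1}ᵀ(cI + D_{t-1})⁻¹e_{t-1} + y_t². -/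

import Mathlib

open Matrix

variable {d : ℕ}

lemma vmv_mulVec (x v : Fin d → ℝ) : vecMulVec x x *ᵥ v = (x ⬝ᵥ v) • x := by
  ext i
  simp [mulVec, vecMulVec_apply, dotProduct, Finset.mul_sum, mul_comm, mul_left_comm]

lemma dot_vmv (x v : Fin d → ℝ) : v ⬝ᵥ (vecMulVec x x *ᵥ v) = (v ⬝ᵥ x)^2 := by
  rw [vmv_mulVec, dotProduct_smul]
  rw [dotProduct_comm x v]; ring_nf

lemma posSemidef_vmv (x : Fin d → ℝ) : (vecMulVec x x).PosSemidef := by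
  rw [posSemidef_iff_dotProduct_mulVec]
  constructor
  · ext i j; simp [vecMulVec_apply, mul_comm]
  · intro v
    have : star v ⬝ᵥ (vecMulVec x x *ᵥ v) = (x ⬝ᵥ v)^2 := by
      simp only [star_trivial, vmv_mulVec, dotProduct_smul, smul_eq_mul]
      rw [dotProduct_comm v x]; ring
    rw [this]; positivity

lemma posDef_smul_one {b : ℝ} (hb : 0 < b) : (b • (1 : Matrix (Fin d) (Fin d) ℝ)).PosDef := by
  rw [posDef_iff_dotProduct_mulVec]
  constructor
  · ext i j; simp [Matrix.one_apply, eq_comm]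
  · intro v hv
    simp only [star_trivial, smul_mulVec, one_mulVec, dotProduct_smul, smul_eq_mul]
    have : (0:ℝ) < v ⬝ᵥ v := by
      have := dotProduct_star_self_pos_iff (v := v) |>.2 hv
      simpa using this
    positivity

lemma symm_dot {M : Matrix (Fin d) (Fin d) ℝ} (hM : M.IsHermitian) (a v : Fin d → ℝ) :
    a ⬝ᵥ (M *ᵥ v) = v ⬝ᵥ (M *ᵥ a) := by
  have ht : Mᵀ = M := by
    have := hM.eq
    rwa [conjTranspose_eq_transpose_of_trivial] at this
  rw [dotProduct_mulVec, ← mulVec_transpose, ht, dotProduct_comm]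

-- quadratic minimum lemma
lemma quad_min {M : Matrix (Fin d) (Fin d) ℝ} (hM : M.PosDef) (z w : Fin d → ℝ) :
    w ⬝ᵥ (M *ᵥ w) - 2*(w ⬝ᵥ z) + z ⬝ᵥ (M⁻¹ *ᵥ z)
      = (w - M⁻¹ *ᵥ z) ⬝ᵥ (M *ᵥ (w - M⁻¹ *ᵥ z)) := by
  have hdet : IsUnit M.det := hM.det_pos.ne'.isUnit
  have hMz : M *ᵥ (M⁻¹ *ᵥ z) = z := by
    rw [mulVec_mulVec, mul_nonsing_inv _ hdet, one_mulVec]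
  have h1 : (M⁻¹ *ᵥ z) ⬝ᵥ (M *ᵥ w) = w ⬝ᵥ z := by
    rw [symm_dot hM.isHermitian, hMz]
  have h2 : w ⬝ᵥ (M *ᵥ (M⁻¹ *ᵥ z)) = w ⬝ᵥ z := by rw [hMz]
  have h3 : (M⁻¹ *ᵥ z) ⬝ᵥ (M *ᵥ (M⁻¹ *ᵥ z)) = z ⬝ᵥ (M⁻¹ *ᵥ z) := by
    rw [hMz, dotProduct_comm]
  rw [mulVec_sub, dotProduct_sub, sub_dotProduct, sub_dotProduct, h1, h2, h3]
  ring

lemma quad_ge {M : Matrix (Fin d) (Fin d) ℝ} (hM : M.PosDef) (z w : Fin d → ℝ) :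
    w ⬝ᵥ (M *ᵥ w) - 2*(w ⬝ᵥ z) ≥ -(z ⬝ᵥ (M⁻¹ *ᵥ z)) := by
  have := hM.posSemidef.dotProduct_mulVec_nonneg (w - M⁻¹ *ᵥ z)
  rw [star_trivial] at this
  nlinarith [quad_min hM z w]

lemma quad_eq {M : Matrix (Fin d) (Fin d) ℝ} (hM : M.PosDef) (z : Fin d → ℝ) :
    (M⁻¹ *ᵥ z) ⬝ᵥ (M *ᵥ (M⁻¹ *ᵥ z)) - 2*((M⁻¹ *ᵥ z) ⬝ᵥ z) = -(z ⬝ᵥ (M⁻¹ *ᵥ z)) := by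
  have := quad_min hM z (M⁻¹ *ᵥ z)
  simp only [sub_self] at this
  have h0 : (0 : Fin d → ℝ) ⬝ᵥ (M *ᵥ 0) = 0 := by simp
  nlinarith [this]

lemma inv_smul_inv {c : ℝ} (hc : c ≠ 0) {A : Matrix (Fin d) (Fin d) ℝ} (h : IsUnit A.det) :
    (c⁻¹ • A)⁻¹ = c • A⁻¹ := by
  refine inv_eq_left_inv ?_
  rw [Matrix.smul_mul, Matrix.mul_smul, smul_smul, mul_inv_cancel₀ hc,
    nonsing_inv_mul _ h, one_smul]

lemma pd_cA {c : ℝ} (hc : 0 < c) {A : Matrix (Fin d) (Fin d) ℝ} (hA : A.PosDef) :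
    (c • (1 : Matrix (Fin d) (Fin d) ℝ) + A).PosDef :=
  (posDef_smul_one hc).add_posSemidef hA.posSemidef

lemma pd_invsum {c : ℝ} (hc : 0 < c) {A : Matrix (Fin d) (Fin d) ℝ} (hA : A.PosDef) :
    (A⁻¹ + c⁻¹ • (1 : Matrix (Fin d) (Fin d) ℝ)).PosDef :=
  hA.inv.add_posSemidef (posDef_smul_one (by positivity)).posSemidef

lemma id3 {c : ℝ} (hc : 0 < c) {A : Matrix (Fin d) (Fin d) ℝ} (hA : A.PosDef) :
    c • (c • (1 : Matrix (Fin d) (Fin d) ℝ) + A)⁻¹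
    = ((1 : Matrix (Fin d) (Fin d) ℝ) + c⁻¹ • A)⁻¹ := by
  have h1 : (1 : Matrix (Fin d) (Fin d) ℝ) + c⁻¹ • A
      = c⁻¹ • (c • (1 : Matrix (Fin d) (Fin d) ℝ) + A) := by
    rw [smul_add, smul_smul, inv_mul_cancel₀ hc.ne', one_smul]
  rw [h1, inv_smul_inv hc.ne' (pd_cA hc hA).det_pos.ne'.isUnit]

lemma id4 {c : ℝ} (hc : 0 < c) {A : Matrix (Fin d) (Fin d) ℝ} (hA : A.PosDef) :
    (A⁻¹ + c⁻¹ • (1 : Matrix (Fin d) (Fin d) ℝ))⁻¹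
    = c • (1 : Matrix (Fin d) (Fin d) ℝ)
      - (c^2) • (c • (1 : Matrix (Fin d) (Fin d) ℝ) + A)⁻¹ := by
  have hdetA : IsUnit A.det := hA.det_pos.ne'.isUnit
  have hdetM : IsUnit (c • (1 : Matrix (Fin d) (Fin d) ℝ) + A).det :=
    (pd_cA hc hA).det_pos.ne'.isUnit
  have ha : A⁻¹ + c⁻¹ • (1 : Matrix (Fin d) (Fin d) ℝ)
      = c⁻¹ • (A⁻¹ * (c • (1 : Matrix (Fin d) (Fin d) ℝ) + A)) := by
    rw [Matrix.mul_add, Matrix.mul_smul, Matrix.mul_one, nonsing_inv_mul _ hdetA,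
      smul_add, smul_smul, inv_mul_cancel₀ hc.ne', one_smul]
  have hdetprod : IsUnit (A⁻¹ * (c • (1 : Matrix (Fin d) (Fin d) ℝ) + A)).det := by
    rw [Matrix.det_mul]
    exact ((isUnit_nonsing_inv_det _ hdetA).mul hdetM)
  rw [ha, inv_smul_inv hc.ne' hdetprod, Matrix.mul_inv_rev,
    nonsing_inv_nonsing_inv _ hdetA]
  have hb : (c • (1 : Matrix (Fin d) (Fin d) ℝ) + A)⁻¹ * (c • A)
      = c • (1 : Matrix (Fin d) (Fin d) ℝ)
        - (c^2) • (c • (1 : Matrix (Fin d) (Fin d) ℝ) + A)⁻¹ := by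
    have h2 : c • A = c • (c • (1 : Matrix (Fin d) (Fin d) ℝ) + A)
        - (c^2) • (1 : Matrix (Fin d) (Fin d) ℝ) := by
      rw [smul_add, smul_smul, ← sq]; abel
    rw [h2, Matrix.mul_sub, Matrix.mul_smul, Matrix.mul_smul,
      nonsing_inv_mul _ hdetM, Matrix.mul_one]
  rw [← hb, Matrix.mul_smul]

lemma key_step {c : ℝ} (hc : 0 < c) {A : Matrix (Fin d) (Fin d) ℝ} (hA : A.PosDef)
    (e0 : Fin d → ℝ) (f0 y0 : ℝ) (x0 v : Fin d → ℝ) :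
    f0 + c * (v ⬝ᵥ v) + (y0 - v ⬝ᵥ x0)^2
      - (e0 + c • v) ⬝ᵥ ((c • (1 : Matrix (Fin d) (Fin d) ℝ) + A)⁻¹ *ᵥ (e0 + c • v))
    = v ⬝ᵥ (((A⁻¹ + c⁻¹ • (1 : Matrix (Fin d) (Fin d) ℝ))⁻¹ + vecMulVec x0 x0) *ᵥ v)
        - 2 * (v ⬝ᵥ (((1 : Matrix (Fin d) (Fin d) ℝ) + c⁻¹ • A)⁻¹ *ᵥ e0 + y0 • x0))
        + (f0 - e0 ⬝ᵥ ((c • (1 : Matrix (Fin d) (Fin d) ℝ) + A)⁻¹ *ᵥ e0) + y0^2) := by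
  set M := c • (1 : Matrix (Fin d) (Fin d) ℝ) + A with hM
  have hsym : e0 ⬝ᵥ (M⁻¹ *ᵥ v) = v ⬝ᵥ (M⁻¹ *ᵥ e0) :=
    symm_dot (pd_cA hc hA).inv.isHermitian e0 v
  rw [id4 hc hA, ← id3 hc hA]
  simp only [← hM, add_mulVec, mulVec_add, sub_mulVec, smul_mulVec, one_mulVec, mulVec_smul,
    dotProduct_add, add_dotProduct, dotProduct_sub, dotProduct_smul, smul_dotProduct,
    smul_eq_mul, dot_vmv]
  rw [hsym]
  ring


/-- Closed form of the inner minimum of the LASER objective: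
P_t(u) = uᵀD_t u − 2uᵀe_t + f_t, with D, e, f given by the recursions
D₁ = bI + x₁x₁ᵀ, D_t = (D_{t-1}⁻¹ + c⁻¹I)⁻¹ + x_t x_tᵀ, e₁ = y₁x₁,
e_t = (I + c⁻¹D_{t-1})⁻¹e_{t-1} + y_t x_t, f₁ = y₁²,
f_t = f_{t-1} − e_{t-1}ᵀ(cI + D_{t-1})⁻¹e_{t-1} + y_t². -/
theorem stmt_9 (d : ℕ) (b c : ℝ) (hb : 0 < b) (hc : 0 < c)
    (x : ℕ → Fin d → ℝ) (y : ℕ → ℝ)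
    (Q : ℕ → (ℕ → Fin d → ℝ) → ℝ)
    (hQ : ∀ t u, Q t u =
      b * ∑ i, (u 1 i) ^ 2
        + c * ∑ s ∈ Finset.Icc 1 (t - 1), ∑ i, (u (s + 1) i - u s i) ^ 2
        + ∑ s ∈ Finset.Icc 1 t, (y s - ∑ i, u s i * x s i) ^ 2)
    (P : ℕ → (Fin d → ℝ) → ℝ)
    (hP : ∀ t v, IsLeast {r | ∃ u : ℕ → Fin d → ℝ, u t = v ∧ Q t u = r} (P t v))
    (D : ℕ → Matrix (Fin d) (Fin d) ℝ) (e : ℕ → Fin d → ℝ) (f : ℕ → ℝ)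
    (hD1 : D 1 = b • (1 : Matrix (Fin d) (Fin d) ℝ) + vecMulVec (x 1) (x 1))
    (hDrec : ∀ t, 2 ≤ t →
      D t = ((D (t - 1))⁻¹ + c⁻¹ • (1 : Matrix (Fin d) (Fin d) ℝ))⁻¹
              + vecMulVec (x t) (x t))
    (he1 : e 1 = y 1 • x 1)
    (herec : ∀ t, 2 ≤ t →
      e t = ((1 : Matrix (Fin d) (Fin d) ℝ) + c⁻¹ • D (t - 1))⁻¹ *ᵥ e (t - 1)
              + y t • x t)
    (hf1 : f 1 = (y 1) ^ 2)
    (hfrec : ∀ t, 2 ≤ t →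
      f t = f (t - 1)
              - e (t - 1) ⬝ᵥ ((c • (1 : Matrix (Fin d) (Fin d) ℝ) + D (t - 1))⁻¹ *ᵥ e (t - 1))
              + (y t) ^ 2) :
    ∀ t, 1 ≤ t → ∀ u : Fin d → ℝ,
      P t u = u ⬝ᵥ (D t *ᵥ u) - 2 * (u ⬝ᵥ e t) + f t := by
  have hdd : ∀ a b' : Fin d → ℝ, ∑ i, (a i - b' i)^2 = (a - b') ⬝ᵥ (a - b') := by
    intro a b'
    simp [dotProduct, Pi.sub_apply, sq]
  have hDpos : ∀ t, 1 ≤ t → (D t).PosDef := by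
    intro t ht
    induction t, ht using Nat.le_induction with
    | base =>
      rw [hD1]
      exact (posDef_smul_one hb).add_posSemidef (posSemidef_vmv _)
    | succ n hn ih =>
      rw [hDrec (n + 1) (by omega)]
      simp only [Nat.add_sub_cancel]
      exact (pd_invsum hc ih).inv.add_posSemidef (posSemidef_vmv _)
  have hQdep : ∀ m, 1 ≤ m → ∀ u u' : ℕ → Fin d → ℝ,
      (∀ s, 1 ≤ s → s ≤ m → u s = u' s) → Q m u = Q m u' := by
    intro m hm u u' h
    rw [hQ, hQ]
    congr 1
    · congr 1
      · rw [h 1 le_rfl hm]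
      · congr 1
        refine Finset.sum_congr rfl ?_
        intro s hs
        simp only [Finset.mem_Icc] at hs
        rw [h s (by omega) (by omega), h (s+1) (by omega) (by omega)]
    · refine Finset.sum_congr rfl ?_
      intro s hs
      simp only [Finset.mem_Icc] at hs
      rw [h s (by omega) (by omega)]
  have hQdec : ∀ n, 1 ≤ n → ∀ u : ℕ → Fin d → ℝ,
      Q (n+1) u = Q n u + c * ∑ i, (u (n+1) i - u n i)^2
        + (y (n+1) - ∑ i, u (n+1) i * x (n+1) i)^2 := by
    intro n hn u
    obtain ⟨k, rfl⟩ : ∃ k, n = k + 1 := ⟨n - 1, by omega⟩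
    rw [hQ (k+1+1), hQ (k+1)]
    simp only [Nat.add_sub_cancel]
    rw [Finset.sum_Icc_succ_top (by omega : 1 ≤ k + 1)
      (fun s => ∑ i, (u (s + 1) i - u s i) ^ 2)]
    rw [Finset.sum_Icc_succ_top (by omega : 1 ≤ k + 1 + 1)
      (fun s => (y s - ∑ i, u s i * x s i) ^ 2)]
    ring
  have hkey : ∀ t, 1 ≤ t → ∀ v : Fin d → ℝ,
      IsLeast {r | ∃ u : ℕ → Fin d → ℝ, u t = v ∧ Q t u = r}
        (v ⬝ᵥ (D t *ᵥ v) - 2 * (v ⬝ᵥ e t) + f t) := by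
    intro t ht
    induction t, ht using Nat.le_induction with
    | base =>
      intro v
      have hval : ∀ u : ℕ → Fin d → ℝ, u 1 = v →
          Q 1 u = v ⬝ᵥ (D 1 *ᵥ v) - 2 * (v ⬝ᵥ e 1) + f 1 := by
        intro u hu
        rw [hQ, hD1, he1, hf1]
        rw [show (1:ℕ) - 1 = 0 from rfl, show Finset.Icc 1 0 = (∅ : Finset ℕ) from
          Finset.Icc_eq_empty (by omega), Finset.Icc_self, Finset.sum_singleton,
          Finset.sum_empty, hu]
        have h1 : ∑ i, (v i)^2 = v ⬝ᵥ v := by simp [dotProduct, sq]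
        have h2 : ∑ i, v i * x 1 i = v ⬝ᵥ x 1 := rfl
        rw [h1, h2]
        simp only [add_mulVec, smul_mulVec, one_mulVec, dotProduct_add,
          dotProduct_smul, dot_vmv, smul_eq_mul]
        ring
      constructor
      · exact ⟨fun _ => v, rfl, hval _ rfl⟩
      · rintro r ⟨u, hu, rfl⟩
        exact le_of_eq (hval u hu).symm
    | succ n hn ih =>
      intro v
      have hA : (D n).PosDef := hDpos n hn
      have hMpd : (c • (1 : Matrix (Fin d) (Fin d) ℝ) + D n).PosDef := pd_cA hc hA
      set M := c • (1 : Matrix (Fin d) (Fin d) ℝ) + D n with hMdef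
      set z := e n + c • v with hz
      have hg : v ⬝ᵥ (D (n+1) *ᵥ v) - 2 * (v ⬝ᵥ e (n+1)) + f (n+1)
          = f n + c * (v ⬝ᵥ v) + (y (n+1) - v ⬝ᵥ x (n+1))^2 - z ⬝ᵥ (M⁻¹ *ᵥ z) := by
        rw [hDrec (n+1) (by omega), herec (n+1) (by omega), hfrec (n+1) (by omega)]
        simp only [Nat.add_sub_cancel]
        exact (key_step hc hA (e n) (f n) (y (n+1)) (x (n+1)) v).symm
      have hcomb : ∀ w : Fin d → ℝ,
          (w ⬝ᵥ (D n *ᵥ w) - 2 * (w ⬝ᵥ e n) + f n) + c * ((v - w) ⬝ᵥ (v - w))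
            + (y (n+1) - v ⬝ᵥ x (n+1))^2
          = (w ⬝ᵥ (M *ᵥ w) - 2 * (w ⬝ᵥ z))
            + (f n + c * (v ⬝ᵥ v) + (y (n+1) - v ⬝ᵥ x (n+1))^2) := by
        intro w
        simp only [hMdef, hz, add_mulVec, smul_mulVec, one_mulVec,
          dotProduct_add, dotProduct_sub, sub_dotProduct, dotProduct_smul, smul_eq_mul]
        rw [dotProduct_comm v w]
        ring
      constructor
      · obtain ⟨u', hu'm, hQ'⟩ := (ih (M⁻¹ *ᵥ z)).1
        refine ⟨Function.update u' (n+1) v, Function.update_self _ _ _, ?_⟩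
        have hQn : Q n (Function.update u' (n+1) v) = Q n u' := by
          apply hQdep n hn
          intro s hs1 hs2
          exact Function.update_of_ne (by omega) _ _
        rw [hQdec n hn, hQn, hQ', hg]
        simp only [Function.update_self, Function.update_of_ne (show n ≠ n+1 by omega),
          hu'm]
        rw [hdd v (M⁻¹ *ᵥ z)]
        have h2 : ∑ i, v i * x (n+1) i = v ⬝ᵥ x (n+1) := rfl
        rw [h2, hcomb (M⁻¹ *ᵥ z)]
        have := quad_eq hMpd z
        linarith
      · rintro r ⟨u, hu, rfl⟩
        rw [hQdec n hn, hg]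
        have h1 : u n ⬝ᵥ (D n *ᵥ u n) - 2 * (u n ⬝ᵥ e n) + f n ≤ Q n u :=
          (ih (u n)).2 ⟨u, rfl, rfl⟩
        have h2 : ∑ i, (u (n+1) i - u n i)^2 = (v - u n) ⬝ᵥ (v - u n) := by
          rw [hu, hdd]
        have h3 : ∑ i, u (n+1) i * x (n+1) i = v ⬝ᵥ x (n+1) := by rw [hu]; rfl
        rw [h2, h3]
        have h4 := quad_ge hMpd z (u n)
        have h5 := hcomb (u n)
        linarith
  intro t ht u
  exact (hP t u).unique (hkey t ht u)
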